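/- The van der Corput sequence in base 2 (x_n = g_2(n) for n ≥ 1, where g_2 reverses the binary digits of n across the radix point) has the property that for every N ≥ 2 the point set {x_1,...,x_N} has at most two distinct gap lengths between neighboring elements. -/

import Mathlib

open scoped Classical

/-- The van der Corput radical-inverse function in base 2: for
`n = a_0 + a_1·2 + ⋯ + a_k·2^k`, `g₂(n) = a_0/2 + a_1/4 + ⋯ + a_k/2^{k+1}`. -/
noncomputable def g2 (n : ℕ) : ℝ :=
  ∑ i ∈ Finset.range (n + 1), (if Nat.testBit n i then (1 : ℝ) else 0) / 2 ^ (i + 1)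

lemma g2_eq_sum (n M : ℕ) (h : n + 1 ≤ M) :
    g2 n = ∑ i ∈ Finset.range M, (if Nat.testBit n i then (1 : ℝ) else 0) / 2 ^ (i + 1) := by
  unfold g2
  refine Finset.sum_subset (Finset.range_subset_range.2 h) ?_
  intro i _ hi
  simp only [Finset.mem_range, not_lt] at hi
  rw [Nat.testBit_eq_false_of_lt
    (lt_of_lt_of_le (Nat.lt_two_pow_self (n := n)) (Nat.pow_le_pow_right (by norm_num) (by omega)))]
  simp

lemma g2_zero : g2 0 = 0 := by
  simp [g2]

lemma g2_two_mul (n : ℕ) : g2 (2 * n) = g2 n / 2 := by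
  rw [g2_eq_sum (2*n) (2*n+1+1) (by omega), Finset.sum_range_succ',
      g2_eq_sum n (2*n+1) (by omega), Finset.sum_div]
  have h0 : (2*n).testBit 0 = false := by
    simp [Nat.testBit_zero, Nat.mul_mod_right]
  rw [h0]
  simp only [Bool.false_eq_true, if_false, zero_div, add_zero]
  apply Finset.sum_congr rfl
  intro i _
  have hb : (2*n).testBit (i+1) = n.testBit i := by
    rw [Nat.testBit_succ, Nat.mul_div_cancel_left _ (by norm_num)]
  rw [hb]
  by_cases h : n.testBit i <;> simp [h] <;> ring

lemma g2_two_mul_add_one (n : ℕ) : g2 (2 * n + 1) = 1/2 + g2 n / 2 := by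
  rw [g2_eq_sum (2*n+1) (2*n+1+1+1) (by omega), Finset.sum_range_succ',
      g2_eq_sum n (2*n+1+1) (by omega), Finset.sum_div]
  have hmod : (2*n+1) % 2 = 1 := by omega
  have h0 : (2*n+1).testBit 0 = true := by
    simp [Nat.testBit_zero, hmod]
  rw [h0]
  simp only [if_true]
  have hsum : ∀ i ∈ Finset.range (2*n+1+1),
      (if (2*n+1).testBit (i+1) then (1:ℝ) else 0) / 2 ^ (i+1+1)
      = (if n.testBit i then (1:ℝ) else 0) / 2 ^ (i+1) / 2 := by
    intro i _
    have hb : (2*n+1).testBit (i+1) = n.testBit i := by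
      rw [Nat.testBit_succ]
      congr 1
      omega
    rw [hb]
    by_cases h : n.testBit i <;> simp [h] <;> ring
  rw [Finset.sum_congr rfl hsum]
  norm_num
  ring

lemma g2_nonneg (n : ℕ) : 0 ≤ g2 n := by
  unfold g2
  apply Finset.sum_nonneg
  intro i _
  apply div_nonneg
  · split <;> norm_num
  · positivity

lemma g2_lt_one : ∀ n : ℕ, g2 n < 1 := by
  intro n
  induction n using Nat.strong_induction_on with
  | _ n ih =>
    rcases Nat.eq_zero_or_pos n with h0 | h0
    · subst h0; rw [g2_zero]; norm_num
    rcases Nat.mod_two_eq_zero_or_one n with hp | hp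
    · obtain ⟨q, rfl⟩ : ∃ q, n = 2*q := ⟨n/2, by omega⟩
      rw [g2_two_mul]
      have := ih q (by omega)
      linarith
    · obtain ⟨q, rfl⟩ : ∃ q, n = 2*q+1 := ⟨n/2, by omega⟩
      rw [g2_two_mul_add_one]
      have := ih q (by omega)
      linarith

lemma g2_pos : ∀ n : ℕ, 1 ≤ n → 0 < g2 n := by
  intro n
  induction n using Nat.strong_induction_on with
  | _ n ih =>
    intro hn
    rcases Nat.mod_two_eq_zero_or_one n with hp | hp
    · obtain ⟨q, rfl⟩ : ∃ q, n = 2*q := ⟨n/2, by omega⟩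
      rw [g2_two_mul]
      have := ih q (by omega) (by omega)
      linarith
    · obtain ⟨q, rfl⟩ : ∃ q, n = 2*q+1 := ⟨n/2, by omega⟩
      rw [g2_two_mul_add_one]
      have := g2_nonneg q
      linarith

lemma g2_inj : ∀ a b : ℕ, g2 a = g2 b → a = b := by
  intro a
  induction a using Nat.strong_induction_on with
  | _ a ih =>
    intro b hab
    rcases Nat.eq_zero_or_pos a with ha | ha
    · subst ha
      by_contra hb0
      have := g2_pos b (by omega)
      rw [← hab, g2_zero] at this
      linarith
    rcases Nat.eq_zero_or_pos b with hb | hb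
    · subst hb
      have := g2_pos a (by omega)
      rw [hab, g2_zero] at this
      linarith
    rcases Nat.mod_two_eq_zero_or_one a with hpa | hpa <;>
      rcases Nat.mod_two_eq_zero_or_one b with hpb | hpb
    · obtain ⟨p, rfl⟩ : ∃ p, a = 2*p := ⟨a/2, by omega⟩
      obtain ⟨q, rfl⟩ : ∃ q, b = 2*q := ⟨b/2, by omega⟩
      rw [g2_two_mul, g2_two_mul] at hab
      have : g2 p = g2 q := by linarith
      have := ih p (by omega) q this
      omega
    · obtain ⟨p, rfl⟩ : ∃ p, a = 2*p := ⟨a/2, by omega⟩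
      obtain ⟨q, rfl⟩ : ∃ q, b = 2*q+1 := ⟨b/2, by omega⟩
      rw [g2_two_mul, g2_two_mul_add_one] at hab
      have h1 := g2_lt_one p
      have h2 := g2_nonneg q
      linarith
    · obtain ⟨p, rfl⟩ : ∃ p, a = 2*p+1 := ⟨a/2, by omega⟩
      obtain ⟨q, rfl⟩ : ∃ q, b = 2*q := ⟨b/2, by omega⟩
      rw [g2_two_mul_add_one, g2_two_mul] at hab
      have h1 := g2_lt_one q
      have h2 := g2_nonneg p
      linarith
    · obtain ⟨p, rfl⟩ : ∃ p, a = 2*p+1 := ⟨a/2, by omega⟩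
      obtain ⟨q, rfl⟩ : ∃ q, b = 2*q+1 := ⟨b/2, by omega⟩
      rw [g2_two_mul_add_one, g2_two_mul_add_one] at hab
      have : g2 p = g2 q := by linarith
      have := ih p (by omega) q this
      omega

lemma g2_dyadic : ∀ M n : ℕ, n < 2^M → ∃ k : ℕ, k < 2^M ∧ g2 n = (k : ℝ) / 2^M := by
  intro M
  induction M with
  | zero =>
    intro n hn
    interval_cases n
    exact ⟨0, by norm_num, by simp [g2_zero]⟩
  | succ M ih =>
    intro n hn
    have hpow : (2:ℕ)^(M+1) = 2*2^M := by ring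
    rcases Nat.mod_two_eq_zero_or_one n with hp | hp
    · obtain ⟨q, rfl⟩ : ∃ q, n = 2*q := ⟨n/2, by omega⟩
      obtain ⟨k, hk, hgk⟩ := ih q (by omega)
      refine ⟨k, by omega, ?_⟩
      rw [g2_two_mul, hgk, pow_succ]
      ring
    · obtain ⟨q, rfl⟩ : ∃ q, n = 2*q+1 := ⟨n/2, by omega⟩
      obtain ⟨k, hk, hgk⟩ := ih q (by omega)
      refine ⟨2^M + k, by omega, ?_⟩
      rw [g2_two_mul_add_one, hgk, pow_succ]
      have h2 : (2:ℝ)^M ≠ 0 := by positivity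
      push_cast
      field_simp
      try ring

lemma g2_surj : ∀ M k : ℕ, k < 2^M → ∃ n : ℕ, n < 2^M ∧ g2 n = (k : ℝ) / 2^M := by
  intro M
  induction M with
  | zero =>
    intro k hk
    interval_cases k
    exact ⟨0, by norm_num, by simp [g2_zero]⟩
  | succ M ih =>
    intro k hk
    have hpow : (2:ℕ)^(M+1) = 2*2^M := by ring
    rcases lt_or_ge k (2^M) with h | h
    · obtain ⟨n, hn, hg⟩ := ih k h
      refine ⟨2*n, by omega, ?_⟩
      rw [g2_two_mul, hg, pow_succ]
      ring
    · obtain ⟨n, hn, hg⟩ := ih (k - 2^M) (by omega)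
      refine ⟨2*n+1, by omega, ?_⟩
      rw [g2_two_mul_add_one, hg, pow_succ]
      have hc : ((k - 2^M : ℕ) : ℝ) = (k:ℝ) - 2^M := by
        push_cast [h]
        ring
      rw [hc]
      have h2 : (2:ℝ)^M ≠ 0 := by positivity
      field_simp
      try ring

/-- for every `N ≥ 2`, the point set `{x_1,…,x_N}` of the base-2 van der Corput
sequence `x_n = g₂(n)` has at most two distinct gap lengths: for any ordering
`x_{σ(0)+1} ≤ ⋯ ≤ x_{σ(N-1)+1}` of the points, the set of consecutive differences has at most
two elements. -/
theorem stmt13 (N : ℕ) (hN : 2 ≤ N) (σ : Equiv.Perm (Fin N))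
    (hσ : Monotone fun i : Fin N => g2 ((σ i : ℕ) + 1)) :
    Set.ncard {d : ℝ | ∃ i j : Fin N, (j : ℕ) = (i : ℕ) + 1 ∧
        d = g2 ((σ j : ℕ) + 1) - g2 ((σ i : ℕ) + 1)} ≤ 2 := by
  set m := Nat.log 2 N with hm
  have hm1 : 2^m ≤ N := Nat.pow_log_le_self 2 (by omega)
  have hm2 : N < 2^(m+1) := Nat.lt_pow_succ_log_self (by norm_num) N
  have hpow : (2:ℕ)^(m+1) = 2*2^m := by ring
  have h2R : (0:ℝ) < 2^(m+1) := by positivity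
  have h2Rm : (0:ℝ) < 2^m := by positivity
  have hsub : {d : ℝ | ∃ i j : Fin N, (j : ℕ) = (i : ℕ) + 1 ∧
        d = g2 ((σ j : ℕ) + 1) - g2 ((σ i : ℕ) + 1)}
      ⊆ {1/2^(m+1), 2/2^(m+1)} := by
    rintro d ⟨i, j, hij, rfl⟩
    have hile : i ≤ j := by
      rw [Fin.le_def]; omega
    obtain ⟨a, halt, hav⟩ := g2_dyadic (m+1) ((σ i : ℕ)+1) (by have := (σ i).isLt; omega)
    obtain ⟨b, hblt, hbv⟩ := g2_dyadic (m+1) ((σ j : ℕ)+1) (by have := (σ j).isLt; omega)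
    -- strict order
    have hne : g2 ((σ i : ℕ)+1) ≠ g2 ((σ j : ℕ)+1) := by
      intro h
      have h1 := g2_inj _ _ h
      have h2 : σ i = σ j := by
        apply Fin.ext; omega
      have h3 : i = j := σ.injective h2
      rw [h3] at hij
      omega
    have hxy : g2 ((σ i : ℕ)+1) < g2 ((σ j : ℕ)+1) := lt_of_le_of_ne (hσ hile) hne
    have hab : a < b := by
      rw [hav, hbv, div_lt_div_iff_of_pos_right h2R] at hxy
      exact_mod_cast hxy
    have ha1 : 1 ≤ a := by
      rcases Nat.eq_zero_or_pos a with h0 | h0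
      · exfalso
        have hp := g2_pos ((σ i : ℕ)+1) (by omega)
        rw [hav, h0] at hp
        norm_num at hp
      · exact h0
    -- key claim : b ≤ a + 2
    have hba : b ≤ a + 2 := by
      by_contra hcon
      push_neg at hcon
      set c := a/2 + 1 with hc
      have hcfacts : a < 2*c ∧ 2*c < b ∧ 1 ≤ c ∧ c < 2^m := by
        constructor
        · omega
        constructor
        · omega
        constructor
        · omega
        · omega
      obtain ⟨hc1, hc2, hc3, hc4⟩ := hcfacts
      obtain ⟨n, hnlt, hgn⟩ := g2_surj m c hc4
      have hn1 : 1 ≤ n := by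
        rcases Nat.eq_zero_or_pos n with h0 | h0
        · exfalso
          rw [h0, g2_zero] at hgn
          have : (0:ℝ) < (c:ℝ)/2^m := by
            apply div_pos _ h2Rm
            exact_mod_cast hc3
          linarith
        · exact h0
      have hnN : n - 1 < N := by omega
      set k : Fin N := σ.symm ⟨n-1, hnN⟩ with hk
      have hσk : (σ k : ℕ) + 1 = n := by
        rw [hk, Equiv.apply_symm_apply]
        simp
        omega
      have hgkv : g2 ((σ k : ℕ)+1) = (c:ℝ)/2^m := by rw [hσk]; exact hgn
      have hcc : (c:ℝ)/2^m = (2*(c:ℝ))/2^(m+1) := by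
        rw [pow_succ]
        field_simp
      have hlow : g2 ((σ i : ℕ)+1) < g2 ((σ k : ℕ)+1) := by
        rw [hav, hgkv, hcc, div_lt_div_iff_of_pos_right h2R]
        exact_mod_cast hc1
      have hhigh : g2 ((σ k : ℕ)+1) < g2 ((σ j : ℕ)+1) := by
        rw [hbv, hgkv, hcc, div_lt_div_iff_of_pos_right h2R]
        exact_mod_cast hc2
      have hki : ¬ (k ≤ i) := fun h => absurd (hσ h) (not_le.2 hlow)
      have hjk : ¬ (j ≤ k) := fun h => absurd (hσ h) (not_le.2 hhigh)
      rw [Fin.le_def, not_le] at hki hjk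
      omega
    -- conclude
    have hd : g2 ((σ j : ℕ)+1) - g2 ((σ i : ℕ)+1) = ((b:ℝ) - a)/2^(m+1) := by
      rw [hav, hbv]
      ring
    have hb12 : b = a + 1 ∨ b = a + 2 := by omega
    rcases hb12 with h | h
    · have he : g2 ((σ j : ℕ)+1) - g2 ((σ i : ℕ)+1) = 1/2^(m+1) := by
        rw [hd, h]; push_cast; ring
      rw [he]; exact Set.mem_insert _ _
    · have he : g2 ((σ j : ℕ)+1) - g2 ((σ i : ℕ)+1) = 2/2^(m+1) := by
        rw [hd, h]; push_cast; ring
      rw [he]; exact Set.mem_insert_of_mem _ rfl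
  calc Set.ncard {d : ℝ | ∃ i j : Fin N, (j : ℕ) = (i : ℕ) + 1 ∧
        d = g2 ((σ j : ℕ) + 1) - g2 ((σ i : ℕ) + 1)}
      ≤ Set.ncard ({1/2^(m+1), 2/2^(m+1)} : Set ℝ) :=
        Set.ncard_le_ncard hsub ((Set.finite_singleton _).insert _)
    _ ≤ 2 := by
        apply le_trans (Set.ncard_insert_le _ _)
        simp
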